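/- For all positive integers a and b, 1 + (2^a - 1)(2^b - 1) / ((2^{gcd(a,b)} - 1) · 2^{(a+b)/2}) > 2^{(a+b)/2 - gcd(a,b)}, where the inequalities are over the reals and 2^{(a+b)/2} denotes the real square root of 2^{a+b}. -/

import Mathlib

/-- For all positive integers `a, b`,
`1 + (2^a - 1)(2^b - 1) / ((2^(gcd a b) - 1) * 2^((a+b)/2)) > 2^((a+b)/2 - gcd a b)`,
where `2^((a+b)/2)` is interpreted as the real square root of `2^(a+b)`. -/
theorem stmt0 (a b : ℕ) (ha : 0 < a) (hb : 0 < b) :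
    1 + ((2 ^ a - 1) * (2 ^ b - 1)) /
      ((2 ^ Nat.gcd a b - 1) * Real.sqrt (2 ^ (a + b))) >
    Real.sqrt (2 ^ (a + b)) / 2 ^ Nat.gcd a b := by
  wlog hab : b ≤ a generalizing a b
  · have := this b a hb ha (le_of_not_ge hab)
    simpa [Nat.gcd_comm, Nat.add_comm, mul_comm] using this
  set g := Nat.gcd a b with hgdef
  have hga : g ≤ a := Nat.gcd_le_left b ha
  have hgb : g ≤ b := Nat.le_of_dvd hb (Nat.gcd_dvd_right a b)
  have hg1 : 1 ≤ g := Nat.gcd_pos_of_pos_left b ha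
  set s := Real.sqrt (2 ^ (a + b)) with hsdef
  have hs0 : 0 < s := Real.sqrt_pos.mpr (by positivity)
  have hs2 : s * s = 2 ^ (a + b) := Real.mul_self_sqrt (by positivity)
  have hsb : (2:ℝ) ^ b ≤ s := by
    rw [hsdef]
    have h2b : (2:ℝ) ^ b = Real.sqrt ((2:ℝ) ^ (2 * b)) := by
      rw [two_mul, pow_add, Real.sqrt_mul_self (by positivity)]
    rw [h2b]
    exact Real.sqrt_le_sqrt (pow_le_pow_right₀ one_le_two (by omega))
  have hgp : (1:ℝ) < 2 ^ g := one_lt_pow₀ one_lt_two (by omega)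
  have hD : (0:ℝ) < (2 ^ g - 1) * s := by
    apply mul_pos (by linarith) hs0
  have hgpow : (0:ℝ) < 2 ^ g := by positivity
  have hrw : 1 + ((2:ℝ) ^ a - 1) * (2 ^ b - 1) / ((2 ^ g - 1) * s)
      = (((2:ℝ) ^ g - 1) * s + (2 ^ a - 1) * (2 ^ b - 1)) / ((2 ^ g - 1) * s) := by
    field_simp
    rw [add_div, mul_div_cancel_left₀ _ (by linarith : (2:ℝ) ^ g - 1 ≠ 0)]
  rw [gt_iff_lt, hrw, div_lt_div_iff₀ hgpow hD]
  set c := a + b - g with hcdef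
  have hc : a + b = c + g := by omega
  have hca : a ≤ c := by omega
  have hcp : (2:ℝ) ^ a ≤ 2 ^ c := pow_le_pow_right₀ one_le_two hca
  have h2ab : (2:ℝ) ^ (a + b) = 2 ^ c * 2 ^ g := by rw [hc, pow_add]
  have hba : (2:ℝ) ^ b ≤ 2 ^ a := pow_le_pow_right₀ one_le_two hab
  have hab2 : (2:ℝ) ^ a * 2 ^ b = 2 ^ c * 2 ^ g := by rw [← pow_add, h2ab]
  rw [show s * ((2 ^ g - 1) * s) = (2 ^ g - 1) * (s * s) by ring, hs2, h2ab]
  have h3 := mul_le_mul_of_nonneg_right hsb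
    (mul_nonneg hgpow.le (by linarith : (0:ℝ) ≤ 2 ^ g - 1))
  have h2 := mul_le_mul_of_nonneg_right hcp hgpow.le
  have h2g : (2:ℝ) ≤ 2 ^ g := by
    calc (2:ℝ) = 2 ^ 1 := (pow_one 2).symm
    _ ≤ 2 ^ g := pow_le_pow_right₀ one_le_two hg1
  have h4 : (2:ℝ) ^ b * 2 ^ g ≤ 2 ^ b * 2 ^ g * (2 ^ g - 1) := by
    nlinarith [mul_nonneg (mul_nonneg (pow_nonneg (by norm_num : (0:ℝ) ≤ 2) b) hgpow.le)
      (by linarith : (0:ℝ) ≤ 2 ^ g - 2)]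
  nlinarith [h3, h4, h2, hab2, hgpow, hgp]
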